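/- arXiv:2410.07958 — 2 statements merged into one kernel-verified Lean document; each statement's English description precedes it below -/
import Mathlib

section
/- Let σ_1, σ_2 ∈ R^{d×q} and p_1 ∈ (0,1). If there exists an orthogonal matrix O ∈ R^{q×q} with σσ* ≤ (p_1 σ_1 + (1−p_1) σ_2 O)(p_1 σ_1 + (1−p_1) σ_2 O)*, then there exists a positive semi-definite Γ ∈ R^{2d×2d} with diagonal blocks σ_1σ_1* and σ_2σ_2* such that σσ* ≤ (p_1 I_d, (1−p_1) I_d) Γ (p_1 I_d, (1−p_1) I_d)*. -/
open MeasureTheory ProbabilityTheory Matrix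

noncomputable def stdGaussianPi (d : ℕ) : Measure (Fin d → ℝ) :=
  Measure.pi fun _ => gaussianReal 0 1

/-- The square root of a positive semidefinite matrix, as defined in the older Mathlib. -/
noncomputable def Matrix.PosSemidef.sqrt {n : Type*} [Fintype n] [DecidableEq n]
    {A : Matrix n n ℝ} (hA : A.PosSemidef) : Matrix n n ℝ :=
  hA.1.eigenvectorUnitary.1 * diagonal ((↑) ∘ (√·) ∘ hA.1.eigenvalues) *
    (star hA.1.eigenvectorUnitary : Matrix n n ℝ)

/-- The Gaussian law `N_d(m, S)` on `ℝ^d`, defined as the image of the standard Gaussian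
by `z ↦ m + S^{1/2} z`. -/
noncomputable def gaussianPi {d : ℕ} (m : Fin d → ℝ) {S : Matrix (Fin d) (Fin d) ℝ}
    (hS : S.PosSemidef) : Measure (Fin d → ℝ) :=
  Measure.map (fun z => m + hS.sqrt.mulVec z) (stdGaussianPi d)

/-- Convex order between measures: `μ ≤_cx ν`. -/
def ConvexOrder {E : Type*} [NormedAddCommGroup E] [NormedSpace ℝ E] [MeasurableSpace E]
    (μ ν : Measure E) : Prop :=
  ∀ φ : E → ℝ, ConvexOn ℝ Set.univ φ → Integrable φ μ → Integrable φ ν →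
    ∫ x, φ x ∂μ ≤ ∫ x, φ x ∂ν
theorem stmt10 {d q : ℕ} (σ σ1 σ2 : Matrix (Fin d) (Fin q) ℝ)
    {p1 : ℝ} (hp1 : p1 ∈ Set.Ioo (0:ℝ) 1)
    (h : ∃ O : Matrix (Fin q) (Fin q) ℝ, O * Oᵀ = 1 ∧
      ((p1 • σ1 + (1 - p1) • (σ2 * O)) * (p1 • σ1 + (1 - p1) • (σ2 * O))ᵀ
        - σ * σᵀ).PosSemidef) :
    ∃ Γ : Matrix (Fin d ⊕ Fin d) (Fin d ⊕ Fin d) ℝ, Γ.PosSemidef ∧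
      Γ.toBlocks₁₁ = σ1 * σ1ᵀ ∧ Γ.toBlocks₂₂ = σ2 * σ2ᵀ ∧
      (Matrix.fromCols (p1 • (1 : Matrix (Fin d) (Fin d) ℝ))
          ((1 - p1) • (1 : Matrix (Fin d) (Fin d) ℝ)) * Γ *
        (Matrix.fromCols (p1 • (1 : Matrix (Fin d) (Fin d) ℝ))
          ((1 - p1) • (1 : Matrix (Fin d) (Fin d) ℝ)))ᵀ - σ * σᵀ).PosSemidef := by
  obtain ⟨O, hO, hpsd⟩ := h
  set B : Matrix (Fin d ⊕ Fin d) (Fin q) ℝ := Matrix.fromRows σ1 (σ2 * O) with hB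
  refine ⟨B * Bᵀ, by simpa [Matrix.conjTranspose_eq_transpose_of_trivial] using Matrix.posSemidef_self_mul_conjTranspose B, ?_, ?_, ?_⟩
  · simp [hB, Matrix.transpose_fromRows, Matrix.fromRows_mul_fromCols,
      Matrix.toBlocks_fromBlocks₁₁]
  · simp only [hB, Matrix.transpose_fromRows, Matrix.fromRows_mul_fromCols,
      Matrix.toBlocks_fromBlocks₂₂, Matrix.transpose_mul]
    rw [Matrix.mul_assoc, ← Matrix.mul_assoc O, hO, Matrix.one_mul]
  · have key : Matrix.fromCols (p1 • (1 : Matrix (Fin d) (Fin d) ℝ))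
        ((1 - p1) • (1 : Matrix (Fin d) (Fin d) ℝ)) * B
        = p1 • σ1 + (1 - p1) • (σ2 * O) := by
      simp [hB, Matrix.fromCols_mul_fromRows, Matrix.smul_mul]
    have : Matrix.fromCols (p1 • (1 : Matrix (Fin d) (Fin d) ℝ))
          ((1 - p1) • (1 : Matrix (Fin d) (Fin d) ℝ)) * (B * Bᵀ) *
        (Matrix.fromCols (p1 • (1 : Matrix (Fin d) (Fin d) ℝ))
          ((1 - p1) • (1 : Matrix (Fin d) (Fin d) ℝ)))ᵀ
        = (p1 • σ1 + (1 - p1) • (σ2 * O)) * (p1 • σ1 + (1 - p1) • (σ2 * O))ᵀ := by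
      rw [← Matrix.mul_assoc, key, Matrix.mul_assoc, ← Matrix.transpose_mul, key]
    rw [this]
    exact hpsd
end

section
/- Let Z be an integrable R^q-valued random vector with radial distribution, n ≥ 2, σ, σ_1,…,σ_n ∈ R^{d×q}, p_1,…,p_n ∈ (0,1) with Σ_i p_i = 1. If there exist orthogonal matrices O_1,…,O_n ∈ R^{q×q} with σσ* ≤ (Σ_i p_i σ_i O_i)(Σ_i p_i σ_i O_i)*, then the law of σZ is dominated in the convex order by the mixture Σ_i p_i L(σ_i Z). -/
open MeasureTheory ProbabilityTheory Matrix

namespace Aux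

variable {m n d q : ℕ}

lemma dot_mul (B : Matrix (Fin m) (Fin n) ℝ) (u : Fin m → ℝ) (w : Fin n → ℝ) :
    u ⬝ᵥ (B *ᵥ w) = (Bᵀ *ᵥ u) ⬝ᵥ w := by
  rw [mulVec_transpose, dotProduct_mulVec]

lemma dot_self_nonneg (v : Fin n → ℝ) : 0 ≤ v ⬝ᵥ v :=
  Finset.sum_nonneg fun i _ => mul_self_nonneg _

lemma contraction_flip (B : Matrix (Fin m) (Fin n) ℝ)
    (h : ∀ y : Fin m → ℝ, (Bᵀ *ᵥ y) ⬝ᵥ (Bᵀ *ᵥ y) ≤ y ⬝ᵥ y) :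
    ∀ x : Fin n → ℝ, (B *ᵥ x) ⬝ᵥ (B *ᵥ x) ≤ x ⬝ᵥ x := by
  intro x
  set u := B *ᵥ x with hu
  have h1 : u ⬝ᵥ u = (Bᵀ *ᵥ u) ⬝ᵥ x := by rw [hu, dot_mul, ← hu]
  have hcs : ((Bᵀ *ᵥ u) ⬝ᵥ x) ^ 2 ≤ ((Bᵀ *ᵥ u) ⬝ᵥ (Bᵀ *ᵥ u)) * (x ⬝ᵥ x) := by
    have := Finset.sum_mul_sq_le_sq_mul_sq Finset.univ (Bᵀ *ᵥ u) x
    simpa [dotProduct, pow_two] using this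
  have h2 : (u ⬝ᵥ u) ^ 2 ≤ (u ⬝ᵥ u) * (x ⬝ᵥ x) := by
    calc (u ⬝ᵥ u) ^ 2 = ((Bᵀ *ᵥ u) ⬝ᵥ x) ^ 2 := by rw [h1]
    _ ≤ ((Bᵀ *ᵥ u) ⬝ᵥ (Bᵀ *ᵥ u)) * (x ⬝ᵥ x) := hcs
    _ ≤ (u ⬝ᵥ u) * (x ⬝ᵥ x) := by
        exact mul_le_mul_of_nonneg_right (h u) (dot_self_nonneg x)
  have hun : 0 ≤ u ⬝ᵥ u := dot_self_nonneg u
  rcases eq_or_lt_of_le hun with he | hlt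
  · rw [← he]; exact dot_self_nonneg x
  · nlinarith [h2]

/-- conjugation by an orthogonal matrix -/
def Nmat (W : Matrix (Fin d) (Fin d) ℝ) (e : Fin d → ℝ) : Matrix (Fin d) (Fin d) ℝ :=
  W * Matrix.diagonal e * Wᵀ

section Nmat
variable {W : Matrix (Fin d) (Fin d) ℝ}

lemma Nmat_mul (hW : Wᵀ * W = 1) (e f : Fin d → ℝ) : Nmat W e * Nmat W f = Nmat W (fun i => e i * f i) := by
  unfold Nmat
  have : diagonal e * (Wᵀ * W) * diagonal f = diagonal fun i => e i * f i := by
    rw [hW, mul_one, diagonal_mul_diagonal]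
  calc W * diagonal e * Wᵀ * (W * diagonal f * Wᵀ)
      = W * (diagonal e * (Wᵀ * W) * diagonal f) * Wᵀ := by
        simp only [Matrix.mul_assoc]
    _ = W * diagonal (fun i => e i * f i) * Wᵀ := by rw [this]

lemma Nmat_transpose (e : Fin d → ℝ) : (Nmat W e)ᵀ = Nmat W e := by
  unfold Nmat
  simp [Matrix.transpose_mul, diagonal_transpose, Matrix.mul_assoc]

lemma Nmat_zero : Nmat W (fun _ => (0:ℝ)) = 0 := by
  unfold Nmat
  simp [show (diagonal fun _ : Fin d => (0:ℝ)) = 0 from by simp [diagonal_zero]]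

lemma Nmat_one (hW' : W * Wᵀ = 1) : Nmat W (fun _ => (1:ℝ)) = 1 := by
  unfold Nmat
  simp [show (diagonal fun _ : Fin d => (1:ℝ)) = 1 from by simp [diagonal_one], hW']

lemma dot_Nmat (e : Fin d → ℝ) (y : Fin d → ℝ) :
    y ⬝ᵥ (Nmat W e *ᵥ y) = ∑ i, e i * ((Wᵀ *ᵥ y) i)^2 := by
  unfold Nmat
  rw [← mulVec_mulVec, ← mulVec_mulVec, dot_mul]
  simp only [dotProduct, mulVec_diagonal]
  exact Finset.sum_congr rfl fun i _ => by ring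

end Nmat

lemma mat_eq_zero_of_mulVec {B : Matrix (Fin m) (Fin n) ℝ} (h : ∀ x, B *ᵥ x = 0) : B = 0 := by
  ext i j
  have := congrFun (h (Pi.single j 1)) i
  simpa using this

lemma dot_gram (B : Matrix (Fin m) (Fin n) ℝ) (x : Fin n → ℝ) :
    (B *ᵥ x) ⬝ᵥ (B *ᵥ x) = ((Bᵀ * B) *ᵥ x) ⬝ᵥ x := by
  rw [dot_mul, mulVec_mulVec]

lemma douglas (A σ : Matrix (Fin d) (Fin q) ℝ)
    (h : (A * Aᵀ - σ * σᵀ).PosSemidef) :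
    ∃ K : Matrix (Fin q) (Fin q) ℝ, σ = A * K ∧
      ∀ x : Fin q → ℝ, (K *ᵥ x) ⬝ᵥ (K *ᵥ x) ≤ x ⬝ᵥ x := by
  classical
  set M := A * Aᵀ with hMdef
  have hM : M.PosSemidef := by
    have := Matrix.posSemidef_self_mul_conjTranspose A
    rwa [conjTranspose_eq_transpose_of_trivial] at this
  have hMt : Mᵀ = M := by
    rw [← conjTranspose_eq_transpose_of_trivial]; exact hM.1
  have hqf : ∀ y : Fin d → ℝ, (σᵀ *ᵥ y) ⬝ᵥ (σᵀ *ᵥ y) ≤ y ⬝ᵥ (M *ᵥ y) := by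
    intro y
    have h2 := h.dotProduct_mulVec_nonneg y
    rw [star_trivial, sub_mulVec, dotProduct_sub] at h2
    have h3 : y ⬝ᵥ ((σ * σᵀ) *ᵥ y) = (σᵀ *ᵥ y) ⬝ᵥ (σᵀ *ᵥ y) := by
      rw [← mulVec_mulVec, dot_mul]
    linarith [h2, h3.le, h3.ge]
  set ν := hM.1.eigenvalues with hνdef
  have hν : ∀ i, 0 ≤ ν i := hM.eigenvalues_nonneg
  set W := (hM.1.eigenvectorUnitary : Matrix (Fin d) (Fin d) ℝ) with hWdef
  have hWmem := hM.1.eigenvectorUnitary.2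
  rw [Unitary.mem_iff] at hWmem
  have hWtW : Wᵀ * W = 1 := by
    have := hWmem.1
    rwa [star_eq_conjTranspose, conjTranspose_eq_transpose_of_trivial] at this
  have hWWt : W * Wᵀ = 1 := by
    have := hWmem.2
    rwa [star_eq_conjTranspose, conjTranspose_eq_transpose_of_trivial] at this
  have hspec : M = Nmat W ν := by
    have := hM.1.spectral_theorem
    rw [Unitary.conjStarAlgAut_apply, star_eq_conjTranspose, conjTranspose_eq_transpose_of_trivial] at this
    simpa [Nmat, RCLike.ofReal_real_eq_id] using this
  set g : Fin d → ℝ := fun i => if ν i = 0 then 0 else (ν i)⁻¹ with hgdef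
  set e : Fin d → ℝ := fun i => if ν i = 0 then 0 else 1 with hedef
  set r : Fin d → ℝ := fun i => Real.sqrt (g i) with hrdef
  have hg_nonneg : ∀ i, 0 ≤ g i := fun i => by
    by_cases hi : ν i = 0 <;> simp [hgdef, hi, inv_nonneg.2 (hν i)]
  have hνg : ∀ i, ν i * g i = e i := fun i => by
    by_cases hi : ν i = 0
    · simp [hgdef, hedef, hi]
    · simp only [hgdef, hedef, if_neg hi]
      exact mul_inv_cancel₀ hi
  have hgν : ∀ i, g i * ν i = e i := fun i => by rw [mul_comm]; exact hνg i
  have hge : ∀ i, g i * e i = g i := fun i => by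
    by_cases hi : ν i = 0 <;> simp [hgdef, hedef, hi]
  have hrr : ∀ i, r i * r i = g i := fun i => Real.mul_self_sqrt (hg_nonneg i)
  set Mp := Nmat W g with hMpdef
  set Ms := Nmat W r with hMsdef
  set Q := Nmat W (fun i => 1 - e i) with hQdef
  have hQM : Q * M = 0 := by
    rw [hspec, hQdef, Nmat_mul hWtW,
      show (fun i => (1 - e i) * ν i) = fun _ => (0:ℝ) from ?_, Nmat_zero]
    funext i
    by_cases hi : ν i = 0 <;> simp [hedef, hi]
  have hMQ : M * Q = 0 := by
    have := congrArg transpose hQM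
    rwa [transpose_mul, Nmat_transpose, hMt, transpose_zero] at this
  have hQσ : Q * σ = 0 := by
    have hz : ∀ x, σᵀ *ᵥ (Q *ᵥ x) = 0 := by
      intro x
      have hle := hqf (Q *ᵥ x)
      have hzero : M *ᵥ (Q *ᵥ x) = 0 := by
        rw [mulVec_mulVec, hMQ, zero_mulVec]
      rw [hzero, dotProduct_zero] at hle
      exact dotProduct_self_eq_zero.mp (le_antisymm hle (dot_self_nonneg _))
    have hσQ : σᵀ * Q = 0 := by
      apply mat_eq_zero_of_mulVec
      intro x
      rw [← mulVec_mulVec]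
      exact hz x
    have := congrArg transpose hσQ
    rwa [transpose_mul, transpose_transpose, Nmat_transpose, transpose_zero] at this
  have hMMpσ : M * Mp * σ = σ := by
    have h1 : M * Mp = Nmat W e := by
      rw [hspec, hMpdef, Nmat_mul hWtW]
      exact congrArg (Nmat W) (funext hνg)
    have h2 : (1 : Matrix (Fin d) (Fin d) ℝ) - Q = Nmat W e := by
      rw [hQdef, ← Nmat_one hWWt]
      unfold Nmat
      rw [← Matrix.sub_mul, ← Matrix.mul_sub, diagonal_sub]
      refine congrArg₂ (fun X Y => W * X * Y) (congrArg diagonal (funext fun i => ?_)) rfl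
      simp [Pi.sub_apply]
    rw [h1, ← h2, Matrix.sub_mul, Matrix.one_mul, hQσ, sub_zero]
  refine ⟨Aᵀ * Mp * σ, ?_, ?_⟩
  · rw [show A * (Aᵀ * Mp * σ) = M * Mp * σ by rw [hMdef]; simp only [Matrix.mul_assoc], hMMpσ]
  · set K := Aᵀ * Mp * σ with hKdef
    have hMp_symm : Mpᵀ = Mp := Nmat_transpose _
    have hMsMs : Ms * Ms = Mp := by
      rw [hMsdef, Nmat_mul hWtW, hMpdef]
      exact congrArg (Nmat W) (funext hrr)
    have hMs_symm : Msᵀ = Ms := Nmat_transpose _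
    have hMpMMp : Mp * M * Mp = Mp := by
      rw [hspec, hMpdef, Nmat_mul hWtW, Nmat_mul hWtW]
      exact congrArg (Nmat W) (funext fun i => by rw [hgν i, mul_comm]; exact hge i)
    have hflip : ∀ y : Fin d → ℝ, ((Ms * σ)ᵀ *ᵥ y) ⬝ᵥ ((Ms * σ)ᵀ *ᵥ y) ≤ y ⬝ᵥ y := by
      intro y
      have e1 : (Ms * σ)ᵀ *ᵥ y = σᵀ *ᵥ (Ms *ᵥ y) := by
        rw [transpose_mul, hMs_symm, ← mulVec_mulVec]
      rw [e1]
      have h1 := hqf (Ms *ᵥ y)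
      have h2 : (Ms *ᵥ y) ⬝ᵥ (M *ᵥ (Ms *ᵥ y)) = y ⬝ᵥ ((Ms * M * Ms) *ᵥ y) := by
        rw [mulVec_mulVec, dot_mul, mulVec_mulVec, dotProduct_comm]
        congr 2
        rw [transpose_mul, hMs_symm, hMt]
      have h3 : Ms * M * Ms = Nmat W e := by
        rw [hspec, hMsdef, Nmat_mul hWtW, Nmat_mul hWtW]
        exact congrArg (Nmat W) (funext fun i => by
          rw [show r i * ν i * r i = (r i * r i) * ν i by ring, hrr i, hgν i])
      have h4 : y ⬝ᵥ (Nmat W e *ᵥ y) ≤ y ⬝ᵥ y := by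
        rw [dot_Nmat]
        have hyy : y ⬝ᵥ y = (Wᵀ *ᵥ y) ⬝ᵥ (Wᵀ *ᵥ y) := by
          rw [dot_mul, mulVec_mulVec, transpose_transpose, hWWt, one_mulVec]
        rw [hyy, show (Wᵀ *ᵥ y) ⬝ᵥ (Wᵀ *ᵥ y) = ∑ i, ((Wᵀ *ᵥ y) i)^2 by
          simp [dotProduct, pow_two]]
        apply Finset.sum_le_sum
        intro i _
        have he1 : e i ≤ 1 := by by_cases hi : ν i = 0 <;> simp [hedef, hi]
        nlinarith [sq_nonneg ((Wᵀ *ᵥ y) i)]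
      calc (σᵀ *ᵥ (Ms *ᵥ y)) ⬝ᵥ (σᵀ *ᵥ (Ms *ᵥ y)) ≤ (Ms *ᵥ y) ⬝ᵥ (M *ᵥ (Ms *ᵥ y)) := h1
        _ = y ⬝ᵥ ((Ms * M * Ms) *ᵥ y) := h2
        _ = y ⬝ᵥ (Nmat W e *ᵥ y) := by rw [h3]
        _ ≤ y ⬝ᵥ y := h4
    have hcontr := contraction_flip (Ms * σ) hflip
    intro x
    have hgram : Kᵀ * K = (Ms * σ)ᵀ * (Ms * σ) := by
      have t1 : Kᵀ = σᵀ * Mp * A := by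
        rw [hKdef, transpose_mul, transpose_mul, transpose_transpose, hMp_symm,
          ← Matrix.mul_assoc]
      rw [t1, hKdef]
      calc σᵀ * Mp * A * (Aᵀ * Mp * σ)
          = σᵀ * (Mp * M * Mp) * σ := by rw [hMdef]; simp only [Matrix.mul_assoc]
        _ = σᵀ * Mp * σ := by rw [hMpMMp]
        _ = σᵀ * (Ms * Ms) * σ := by rw [hMsMs]
        _ = (Ms * σ)ᵀ * (Ms * σ) := by
            rw [transpose_mul, hMs_symm]; simp only [Matrix.mul_assoc]
    have hKx : (K *ᵥ x) ⬝ᵥ (K *ᵥ x) = ((Ms * σ) *ᵥ x) ⬝ᵥ ((Ms * σ) *ᵥ x) := by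
      rw [dot_gram, dot_gram, hgram]
    rw [hKx]
    exact hcontr x


lemma contraction_convexhull (K : Matrix (Fin q) (Fin q) ℝ)
    (hK : ∀ x : Fin q → ℝ, (K *ᵥ x) ⬝ᵥ (K *ᵥ x) ≤ x ⬝ᵥ x) :
    ∃ (w : (Fin q → Bool) → ℝ) (O : (Fin q → Bool) → Matrix (Fin q) (Fin q) ℝ),
      (∀ ε, 0 ≤ w ε) ∧ (∑ ε, w ε = 1) ∧ (∀ ε, O ε * (O ε)ᵀ = 1) ∧
      K = ∑ ε, w ε • O ε := by
  classical
  set S := Kᵀ * K with hSdef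
  have hS : S.PosSemidef := by
    have := Matrix.posSemidef_conjTranspose_mul_self K
    rwa [conjTranspose_eq_transpose_of_trivial] at this
  set μ := hS.1.eigenvalues with hμdef
  have hμ0 : ∀ j, 0 ≤ μ j := hS.eigenvalues_nonneg
  set v : Fin q → EuclideanSpace ℝ (Fin q) := fun j => hS.1.eigenvectorBasis j with hvdef
  have hvon : ∀ i j, (v i : Fin q → ℝ) ⬝ᵥ (v j : Fin q → ℝ) = if i = j then 1 else 0 := by
    intro i j
    have := orthonormal_iff_ite.mp (hS.1.eigenvectorBasis).orthonormal i j
    rw [← this]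
    simp [hvdef, PiLp.inner_apply, RCLike.inner_apply, dotProduct, mul_comm]
  have hSv : ∀ j, S *ᵥ (v j : Fin q → ℝ) = μ j • (v j : Fin q → ℝ) := fun j =>
    hS.1.mulVec_eigenvectorBasis j
  set b : Fin q → (Fin q → ℝ) := fun j => K *ᵥ (v j : Fin q → ℝ) with hbdef
  have hbb : ∀ i j, b i ⬝ᵥ b j = if i = j then μ i else 0 := by
    intro i j
    have h1 : b i ⬝ᵥ b j = ((Kᵀ * K) *ᵥ (v i : Fin q → ℝ)) ⬝ᵥ (v j : Fin q → ℝ) := by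
      rw [hbdef]
      simp only
      rw [dot_mul, mulVec_mulVec]
    rw [h1, ← hSdef, hSv i, smul_dotProduct, hvon i j]
    simp [mul_ite]
  have hμle1 : ∀ j, μ j ≤ 1 := by
    intro j
    have h1 := hK (v j : Fin q → ℝ)
    have h2 : (K *ᵥ (v j : Fin q → ℝ)) ⬝ᵥ (K *ᵥ (v j : Fin q → ℝ)) = μ j := by
      have h := hbb j j
      rw [if_pos rfl] at h
      exact h
    have h3 : (v j : Fin q → ℝ) ⬝ᵥ (v j : Fin q → ℝ) = 1 := by simp [hvon j j]
    rw [h2, h3] at h1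
    exact h1
  set c : Fin q → ℝ := fun j => Real.sqrt (μ j) with hcdef
  have hc0 : ∀ j, 0 ≤ c j := fun j => Real.sqrt_nonneg _
  have hc1 : ∀ j, c j ≤ 1 := fun j => by
    rw [hcdef]
    simpa using Real.sqrt_le_sqrt (hμle1 j)
  have hcc : ∀ j, c j * c j = μ j := fun j => Real.mul_self_sqrt (hμ0 j)
  have hcne : ∀ j, μ j ≠ 0 → c j ≠ 0 := by
    intro j hj hcz
    exact hj (by
      rw [hcdef] at hcz
      simpa using (Real.sqrt_eq_zero (hμ0 j)).mp hcz)
  -- orthonormal family u on the support of μ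
  set s : Set (Fin q) := {j | μ j ≠ 0} with hsdef
  set bE : Fin q → EuclideanSpace ℝ (Fin q) :=
    fun j => (WithLp.equiv 2 (Fin q → ℝ)).symm (b j) with hbEdef
  have hbE : ∀ j i, bE j i = b j i := fun j i => rfl
  set u : Fin q → EuclideanSpace ℝ (Fin q) := fun j => (c j)⁻¹ • bE j with hudef
  have hinner : ∀ i j, (inner ℝ (u i) (u j) : ℝ) = (c i)⁻¹ * (c j)⁻¹ * (b i ⬝ᵥ b j) := by
    intro i j
    rw [hudef]
    simp only [real_inner_smul_left, real_inner_smul_right]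
    rw [show (inner ℝ (bE i) (bE j) : ℝ) = b i ⬝ᵥ b j from by
      simp [PiLp.inner_apply, RCLike.inner_apply, dotProduct, hbE, mul_comm]]
    ring
  have hon : Orthonormal ℝ (s.restrict u) := by
    rw [orthonormal_iff_ite]
    intro ⟨i, hi⟩ ⟨j, hj⟩
    rw [show s.restrict u ⟨i, hi⟩ = u i from rfl, show s.restrict u ⟨j, hj⟩ = u j from rfl, hinner i j, hbb i j]
    by_cases hij : i = j
    · subst hij
      simp only [if_pos rfl, Subtype.mk.injEq]
      have hci : c i ≠ 0 := hcne i hi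
      field_simp
      simpa [pow_two] using (hcc i).symm
    · simp [if_neg hij, Subtype.mk.injEq, hij]
  obtain ⟨e, he⟩ := hon.exists_orthonormalBasis_extension_of_card_eq
    (by simp [finrank_euclideanSpace])
  set U : Matrix (Fin q) (Fin q) ℝ := Matrix.of (fun r j => e j r) with hUdef
  set V : Matrix (Fin q) (Fin q) ℝ := (hS.1.eigenvectorUnitary : Matrix (Fin q) (Fin q) ℝ)
    with hVdef
  have hVmem := hS.1.eigenvectorUnitary.2
  rw [Unitary.mem_iff] at hVmem
  have hVtV : Vᵀ * V = 1 := by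
    have := hVmem.1
    rwa [star_eq_conjTranspose, conjTranspose_eq_transpose_of_trivial] at this
  have hVVt : V * Vᵀ = 1 := by
    have := hVmem.2
    rwa [star_eq_conjTranspose, conjTranspose_eq_transpose_of_trivial] at this
  have hUtU : Uᵀ * U = 1 := by
    ext i j
    have hee := orthonormal_iff_ite.mp e.orthonormal i j
    simp only [PiLp.inner_apply, RCLike.inner_apply, starRingEnd_apply, star_trivial] at hee
    rw [Matrix.mul_apply]
    simp only [hUdef, transpose_apply, of_apply]
    rw [show ∑ k, e i k * e j k = if i = j then (1:ℝ) else 0 from by rw [← hee]; exact Finset.sum_congr rfl fun k _ => mul_comm _ _]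
    simp [Matrix.one_apply]
  have hUUt : U * Uᵀ = 1 := mul_eq_one_comm.mp hUtU
  -- the svd identity
  have hKV : K * V = U * diagonal c := by
    ext i j
    have h1 : (K * V) i j = b j i := by
      rw [Matrix.mul_apply, hbdef]
      simp only [mulVec, dotProduct]
      exact Finset.sum_congr rfl fun k _ => by
        rw [hVdef, Matrix.IsHermitian.eigenvectorUnitary_apply]
    have h2 : (U * diagonal c) i j = e j i * c j := by
      rw [Matrix.mul_diagonal]
      simp [hUdef]
    rw [h1, h2]
    by_cases hj : μ j = 0
    · have hbj : b j = 0 := by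
        have hz := hbb j j
        rw [if_pos rfl, hj] at hz
        exact dotProduct_self_eq_zero.mp hz
      have hcj : c j = 0 := by rw [hcdef]; simp [hj]
      rw [hbj, hcj]
      simp
    · have hcj : c j ≠ 0 := hcne j hj
      rw [he j hj, hudef]
      simp only [PiLp.smul_apply, smul_eq_mul, hbE]
      field_simp
  have hKsvd : K = U * diagonal c * Vᵀ := by
    calc K = K * (V * Vᵀ) := by rw [hVVt, Matrix.mul_one]
    _ = (K * V) * Vᵀ := by rw [Matrix.mul_assoc]
    _ = U * diagonal c * Vᵀ := by rw [hKV]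
  -- sign decomposition of the diagonal
  set sg : Bool → ℝ := fun t => if t then 1 else -1 with hsgdef
  set w : (Fin q → Bool) → ℝ := fun ε => ∏ j, (1 + sg (ε j) * c j) / 2 with hwdef
  set D : (Fin q → Bool) → Matrix (Fin q) (Fin q) ℝ := fun ε => diagonal (fun j => sg (ε j))
    with hDdef
  have hw0 : ∀ ε, 0 ≤ w ε := by
    intro ε
    refine Finset.prod_nonneg fun j _ => ?_
    rcases Bool.dichotomy (ε j) with hb | hb <;> rw [hsgdef] <;> simp [hb]
    · nlinarith [hc1 j]
    · nlinarith [hc0 j]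
  have hpiuniv : (Finset.univ : Finset (Fin q → Bool))
      = Fintype.piFinset fun _ => (Finset.univ : Finset Bool) := (Fintype.piFinset_univ).symm
  have hw1 : ∑ ε, w ε = 1 := by
    rw [hwdef, hpiuniv,
      Finset.sum_prod_piFinset (Finset.univ : Finset Bool) (fun j t => (1 + sg t * c j) / 2)]
    refine Finset.prod_eq_one fun j _ => ?_
    rw [hsgdef]
    simp [Fintype.sum_bool]
    ring
  have hdiag : diagonal c = ∑ ε, w ε • D ε := by
    ext i j
    rw [Matrix.sum_apply]
    by_cases hij : i = j
    · subst hij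
      simp only [diagonal_apply_eq, hDdef, Matrix.smul_apply, diagonal_apply_eq, smul_eq_mul]
      have hterm : ∀ ε : Fin q → Bool,
          w ε * sg (ε i) = ∏ j, ((1 + sg (ε j) * c j) / 2 * (if j = i then sg (ε j) else 1)) := by
        intro ε
        simp only [hwdef]
        rw [Finset.prod_mul_distrib]
        congr 1
        rw [Finset.prod_ite_eq' Finset.univ i fun j => sg (ε j)]
        simp
      symm
      calc (∑ ε : Fin q → Bool, w ε * sg (ε i))
          = ∑ ε : Fin q → Bool,
              ∏ j, ((1 + sg (ε j) * c j) / 2 * (if j = i then sg (ε j) else 1)) :=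
            Finset.sum_congr rfl fun ε _ => hterm ε
        _ = ∏ j, ∑ t : Bool, ((1 + sg t * c j) / 2 * (if j = i then sg t else 1)) := by
            rw [hpiuniv, Finset.sum_prod_piFinset (Finset.univ : Finset Bool)
              (fun j t => (1 + sg t * c j) / 2 * (if j = i then sg t else 1))]
        _ = ∏ j, (if j = i then c j else 1) := by
            refine Finset.prod_congr rfl fun j _ => ?_
            by_cases hji : j = i
            · subst hji
              simp only [if_pos rfl, hsgdef, Fintype.sum_bool]
              norm_num
              ring
            · simp only [if_neg hji, hsgdef, Fintype.sum_bool]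
              norm_num
              ring
        _ = c i := by
            rw [Finset.prod_ite_eq' Finset.univ i c]
            simp
    · rw [diagonal_apply_ne _ hij]
      symm
      refine Finset.sum_eq_zero fun ε _ => ?_
      simp [hDdef, Matrix.smul_apply, diagonal_apply_ne _ hij]
  refine ⟨w, fun ε => U * D ε * Vᵀ, hw0, hw1, ?_, ?_⟩
  · intro ε
    have hDD : D ε * (D ε)ᵀ = 1 := by
      rw [hDdef]
      simp only [diagonal_transpose, diagonal_mul_diagonal]
      rw [show (fun j => sg (ε j) * sg (ε j)) = fun _ => (1:ℝ) from funext fun j => by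
        rcases Bool.dichotomy (ε j) with hb | hb <;> rw [hsgdef] <;> simp [hb]]
      exact diagonal_one
    calc U * D ε * Vᵀ * (U * D ε * Vᵀ)ᵀ
        = U * D ε * (Vᵀ * (Vᵀ)ᵀ) * (D ε)ᵀ * Uᵀ := by
          simp only [transpose_mul, transpose_transpose, Matrix.mul_assoc]
      _ = U * (D ε * (D ε)ᵀ) * Uᵀ := by
          rw [transpose_transpose, hVtV]
          simp only [Matrix.mul_one, Matrix.mul_assoc]
      _ = 1 := by rw [hDD, Matrix.mul_one, hUUt]
  · rw [hKsvd, hdiag, Matrix.mul_sum, Matrix.sum_mul]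
    refine Finset.sum_congr rfl fun ε _ => ?_
    rw [Matrix.mul_smul, Matrix.smul_mul]

lemma main_alg (A σ : Matrix (Fin d) (Fin q) ℝ)
    (h : (A * Aᵀ - σ * σᵀ).PosSemidef) :
    ∃ (w : (Fin q → Bool) → ℝ) (O : (Fin q → Bool) → Matrix (Fin q) (Fin q) ℝ),
      (∀ ε, 0 ≤ w ε) ∧ (∑ ε, w ε = 1) ∧ (∀ ε, O ε * (O ε)ᵀ = 1) ∧
      σ = ∑ ε, w ε • (A * O ε) := by
  obtain ⟨K, hK1, hK2⟩ := douglas A σ h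
  obtain ⟨w, O, hw0, hw1, hO, hKd⟩ := contraction_convexhull K hK2
  refine ⟨w, O, hw0, hw1, hO, ?_⟩
  rw [hK1, hKd, Matrix.mul_sum]
  exact Finset.sum_congr rfl fun ε _ => by rw [Matrix.mul_smul]

-- measure-theory helpers
variable {Ω : Type*} [MeasurableSpace Ω] {μ : Measure Ω} [IsProbabilityMeasure μ]
  {Z : Ω → Fin q → ℝ}

lemma meas_mulVec (B : Matrix (Fin d) (Fin q) ℝ) : Continuous (fun z : Fin q → ℝ => B *ᵥ z) :=
  LinearMap.continuous_of_finiteDimensional (Matrix.mulVecLin B)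

lemma radial_int (hZmeas : Measurable Z)
    (hrad : ∀ O : Matrix (Fin q) (Fin q) ℝ, O * Oᵀ = 1 →
      Measure.map (fun ω => O.mulVec (Z ω)) μ = Measure.map Z μ)
    {Q : Matrix (Fin q) (Fin q) ℝ} (hQ : Q * Qᵀ = 1)
    (B : Matrix (Fin d) (Fin q) ℝ) {φ : (Fin d → ℝ) → ℝ} (hφc : Continuous φ) :
    (Integrable (fun ω => φ (B *ᵥ (Q *ᵥ Z ω))) μ ↔ Integrable (fun ω => φ (B *ᵥ Z ω)) μ) ∧
    ∫ ω, φ (B *ᵥ (Q *ᵥ Z ω)) ∂μ = ∫ ω, φ (B *ᵥ Z ω) ∂μ := by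
  have hg : Continuous (fun z : Fin q → ℝ => φ (B *ᵥ z)) := hφc.comp (meas_mulVec B)
  have hQZ : Measurable (fun ω => Q *ᵥ Z ω) :=
    ((meas_mulVec (d := q) Q).measurable).comp hZmeas
  have h1 : Integrable (fun ω => φ (B *ᵥ (Q *ᵥ Z ω))) μ
      ↔ Integrable (fun z => φ (B *ᵥ z)) (Measure.map (fun ω => Q *ᵥ Z ω) μ) :=
    (integrable_map_measure hg.aestronglyMeasurable hQZ.aemeasurable).symm
  have h2 : Integrable (fun ω => φ (B *ᵥ Z ω)) μ
      ↔ Integrable (fun z => φ (B *ᵥ z)) (Measure.map Z μ) :=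
    (integrable_map_measure hg.aestronglyMeasurable hZmeas.aemeasurable).symm
  constructor
  · rw [h1, h2, hrad Q hQ]
  · rw [← integral_map hQZ.aemeasurable hg.aestronglyMeasurable,
      ← integral_map hZmeas.aemeasurable hg.aestronglyMeasurable, hrad Q hQ]

lemma jensen_int {ι : Type*} [Fintype ι] (hZmeas : Measurable Z)
    {φ : (Fin d → ℝ) → ℝ} (hφ : ConvexOn ℝ Set.univ φ) (hφc : Continuous φ)
    (B : ι → Matrix (Fin d) (Fin q) ℝ) (w : ι → ℝ) (hw0 : ∀ i, 0 ≤ w i) (hw1 : ∑ i, w i = 1)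
    (hint : ∀ i, Integrable (fun ω => φ (B i *ᵥ Z ω)) μ)
    (hint' : ∀ i, Integrable (fun ω => φ (B i *ᵥ (-Z ω))) μ) :
    Integrable (fun ω => φ ((∑ i, w i • B i) *ᵥ Z ω)) μ ∧
    ∫ ω, φ ((∑ i, w i • B i) *ᵥ Z ω) ∂μ ≤ ∑ i, w i * ∫ ω, φ (B i *ᵥ Z ω) ∂μ := by
  set C := ∑ i, w i • B i with hCdef
  have hCv : ∀ z : Fin q → ℝ, C *ᵥ z = ∑ i, w i • (B i *ᵥ z) := by
    intro z
    funext k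
    rw [hCdef]
    simp only [Matrix.mulVec, dotProduct, Matrix.sum_apply, Matrix.smul_apply, smul_eq_mul,
      Finset.sum_apply, Pi.smul_apply]
    calc ∑ l, (∑ i, w i * B i k l) * z l
        = ∑ l, ∑ i, w i * (B i k l * z l) := by
          refine Finset.sum_congr rfl fun l _ => ?_
          rw [Finset.sum_mul]
          exact Finset.sum_congr rfl fun i _ => by ring
      _ = ∑ i, ∑ l, w i * (B i k l * z l) := Finset.sum_comm
      _ = ∑ i, w i * ∑ l, B i k l * z l :=
          Finset.sum_congr rfl fun i _ => (Finset.mul_sum _ _ _).symm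
  have hup : ∀ z : Fin q → ℝ, φ (C *ᵥ z) ≤ ∑ i, w i * φ (B i *ᵥ z) := by
    intro z
    rw [hCv]
    exact hφ.map_sum_le (fun i _ => hw0 i) hw1 (fun i _ => Set.mem_univ _)
  have hlow : ∀ z : Fin q → ℝ, 2 * φ 0 - φ (C *ᵥ (-z)) ≤ φ (C *ᵥ z) := by
    intro z
    have hmid := hφ.2 (Set.mem_univ (C *ᵥ z)) (Set.mem_univ (C *ᵥ (-z)))
      (le_of_lt one_half_pos) (le_of_lt one_half_pos) (by norm_num)
    have hz : (1/2 : ℝ) • (C *ᵥ z) + (1/2 : ℝ) • (C *ᵥ (-z)) = 0 := by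
      rw [Matrix.mulVec_neg]
      module
    rw [hz] at hmid
    simp only [smul_eq_mul] at hmid
    linarith
  -- measurability
  have hmeasφC : AEStronglyMeasurable (fun ω => φ (C *ᵥ Z ω)) μ :=
    ((hφc.comp (meas_mulVec C)).measurable.comp hZmeas).aestronglyMeasurable
  -- integrable upper and lower bounds
  have hG : Integrable (fun ω => ∑ i, w i * φ (B i *ᵥ Z ω)) μ :=
    integrable_finset_sum _ fun i _ => (hint i).const_mul (w i)
  have hGneg : Integrable (fun ω => ∑ i, w i * φ (B i *ᵥ (-Z ω))) μ :=
    integrable_finset_sum _ fun i _ => (hint' i).const_mul (w i)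
  have hupω : ∀ ω, φ (C *ᵥ Z ω) ≤ ∑ i, w i * φ (B i *ᵥ Z ω) := fun ω => hup (Z ω)
  have hlowω : ∀ ω, 2 * φ 0 - ∑ i, w i * φ (B i *ᵥ (-Z ω)) ≤ φ (C *ᵥ Z ω) := by
    intro ω
    have h1 := hlow (Z ω)
    have h2 : φ (C *ᵥ (-Z ω)) ≤ ∑ i, w i * φ (B i *ᵥ (-Z ω)) := hup (-Z ω)
    linarith
  have hintC : Integrable (fun ω => φ (C *ᵥ Z ω)) μ := by
    have hL : Integrable (fun ω => 2 * φ 0 - ∑ i, w i * φ (B i *ᵥ (-Z ω))) μ :=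
      (integrable_const (2 * φ 0)).sub hGneg
    refine Integrable.mono' (hL.abs.add hG.abs) hmeasφC (Filter.Eventually.of_forall fun ω => ?_)
    rw [Real.norm_eq_abs]
    simp only [Pi.add_apply]
    rcases le_or_gt 0 (φ (C *ᵥ Z ω)) with h0 | h0
    · rw [abs_of_nonneg h0]
      have := hupω ω
      have h2 := le_abs_self (∑ i, w i * φ (B i *ᵥ Z ω))
      have h3 := abs_nonneg (2 * φ 0 - ∑ i, w i * φ (B i *ᵥ (-Z ω)))
      linarith
    · rw [abs_of_neg h0]
      have := hlowω ω
      have h2 := neg_abs_le (2 * φ 0 - ∑ i, w i * φ (B i *ᵥ (-Z ω)))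
      have h3 := abs_nonneg (∑ i, w i * φ (B i *ᵥ Z ω))
      linarith
  refine ⟨hintC, ?_⟩
  calc ∫ ω, φ (C *ᵥ Z ω) ∂μ ≤ ∫ ω, ∑ i, w i * φ (B i *ᵥ Z ω) ∂μ :=
        integral_mono hintC hG hupω
    _ = ∑ i, w i * ∫ ω, φ (B i *ᵥ Z ω) ∂μ := by
        rw [integral_finset_sum _ fun i _ => (hint i).const_mul (w i)]
        exact Finset.sum_congr rfl fun i _ => integral_const_mul _ _


end Aux

theorem stmt13 {q d n : ℕ} (hn : 2 ≤ n) {Ω : Type*} [MeasurableSpace Ω] (μ : Measure Ω)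
    [IsProbabilityMeasure μ] (Z : Ω → Fin q → ℝ) (hZmeas : Measurable Z)
    (hZint : Integrable Z μ)
    (hrad : ∀ O : Matrix (Fin q) (Fin q) ℝ, O * Oᵀ = 1 →
      Measure.map (fun ω => O.mulVec (Z ω)) μ = Measure.map Z μ)
    (σ : Matrix (Fin d) (Fin q) ℝ) (σs : Fin n → Matrix (Fin d) (Fin q) ℝ)
    (p : Fin n → ℝ) (hp : ∀ i, p i ∈ Set.Ioo (0:ℝ) 1) (hp1 : ∑ i, p i = 1)
    (h : ∃ O : Fin n → Matrix (Fin q) (Fin q) ℝ, (∀ i, O i * (O i)ᵀ = 1) ∧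
      ((∑ i, p i • (σs i * O i)) * (∑ i, p i • (σs i * O i))ᵀ - σ * σᵀ).PosSemidef) :
    ConvexOrder (Measure.map (fun ω => σ.mulVec (Z ω)) μ)
      (∑ i, ENNReal.ofReal (p i) • Measure.map (fun ω => (σs i).mulVec (Z ω)) μ) := by
  classical
  obtain ⟨O, hO, hpsd⟩ := h
  intro φ hφ hint1 hint2
  have hφc : Continuous φ := by
    rw [← continuousOn_univ]
    exact hφ.continuousOn isOpen_univ
  have hmeas : ∀ B : Matrix (Fin d) (Fin q) ℝ, Measurable (fun ω => B *ᵥ Z ω) :=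
    fun B => (Aux.meas_mulVec B).measurable.comp hZmeas
  have hp0 : ∀ i, (0:ℝ) < p i := fun i => (hp i).1
  have hOneg : ∀ Q : Matrix (Fin q) (Fin q) ℝ, Q * Qᵀ = 1 → (-Q) * (-Q)ᵀ = 1 := by
    intro Q hQ
    rw [transpose_neg, neg_mul_neg]
    exact hQ
  -- integrability of each φ ∘ (σs i *ᵥ Z)
  have hint_i : ∀ i, Integrable (fun ω => φ ((σs i) *ᵥ Z ω)) μ := by
    intro i
    have h1 : Integrable φ
        (ENNReal.ofReal (p i) • Measure.map (fun ω => (σs i).mulVec (Z ω)) μ) :=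
      (integrable_finset_sum_measure.mp hint2) i (Finset.mem_univ i)
    have h2 : Integrable φ (Measure.map (fun ω => (σs i).mulVec (Z ω)) μ) := by
      refine (integrable_smul_measure ?_ ?_).mp h1
      · simp [ENNReal.ofReal_eq_zero, not_le, hp0 i]
      · exact ENNReal.ofReal_ne_top
    exact (integrable_map_measure hφc.aestronglyMeasurable (hmeas (σs i)).aemeasurable).mp h2
  set A := ∑ i, p i • (σs i * O i) with hAdef
  obtain ⟨w, Os, hw0, hw1, hOs, hσeq⟩ := Aux.main_alg A σ hpsd
  -- integrability and invariance for σs i * O i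
  have hmv : ∀ (B : Matrix (Fin d) (Fin q) ℝ) (Q : Matrix (Fin q) (Fin q) ℝ) (z : Fin q → ℝ),
      (B * Q) *ᵥ z = B *ᵥ (Q *ᵥ z) := fun B Q z => (mulVec_mulVec z B Q).symm
  have hint_iO : ∀ i, Integrable (fun ω => φ ((σs i * O i) *ᵥ Z ω)) μ := by
    intro i
    simp only [hmv]
    exact (Aux.radial_int hZmeas hrad (hO i) (σs i) hφc).1.mpr (hint_i i)
  have hint_iO' : ∀ i, Integrable (fun ω => φ ((σs i * O i) *ᵥ (-Z ω))) μ := by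
    intro i
    have hz : ∀ z : Fin q → ℝ, (σs i * O i) *ᵥ (-z) = (σs i) *ᵥ ((-(O i)) *ᵥ z) := by
      intro z
      rw [hmv, Matrix.mulVec_neg, Matrix.neg_mulVec]
    simp only [hz]
    exact (Aux.radial_int hZmeas hrad (hOneg _ (hO i)) (σs i) hφc).1.mpr (hint_i i)
  have hJ1 := Aux.jensen_int hZmeas hφ hφc (fun i => σs i * O i) p
    (fun i => (hp i).1.le) hp1 hint_iO hint_iO'
  have hintA : Integrable (fun ω => φ (A *ᵥ Z ω)) μ := hJ1.1
  -- integrability for A * Os ε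
  have hint_AOs : ∀ ε, Integrable (fun ω => φ ((A * Os ε) *ᵥ Z ω)) μ := by
    intro ε
    simp only [hmv]
    exact (Aux.radial_int hZmeas hrad (hOs ε) A hφc).1.mpr hintA
  have hint_AOs' : ∀ ε, Integrable (fun ω => φ ((A * Os ε) *ᵥ (-Z ω))) μ := by
    intro ε
    have hz : ∀ z : Fin q → ℝ, (A * Os ε) *ᵥ (-z) = A *ᵥ ((-(Os ε)) *ᵥ z) := by
      intro z
      rw [hmv, Matrix.mulVec_neg, Matrix.neg_mulVec]
    simp only [hz]
    exact (Aux.radial_int hZmeas hrad (hOneg _ (hOs ε)) A hφc).1.mpr hintA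
  have hJ2 := Aux.jensen_int hZmeas hφ hφc (fun ε => A * Os ε) w hw0 hw1 hint_AOs hint_AOs'
  -- chain of inequalities
  have hstep1 : ∫ ω, φ (σ *ᵥ Z ω) ∂μ ≤ ∫ ω, φ (A *ᵥ Z ω) ∂μ := by
    have h1 : ∫ ω, φ (σ *ᵥ Z ω) ∂μ = ∫ ω, φ ((∑ ε, w ε • (A * Os ε)) *ᵥ Z ω) ∂μ := by
      rw [← hσeq]
    have h2 : ∀ ε, ∫ ω, φ ((A * Os ε) *ᵥ Z ω) ∂μ = ∫ ω, φ (A *ᵥ Z ω) ∂μ := by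
      intro ε
      simp only [hmv]
      exact (Aux.radial_int hZmeas hrad (hOs ε) A hφc).2
    calc ∫ ω, φ (σ *ᵥ Z ω) ∂μ = ∫ ω, φ ((∑ ε, w ε • (A * Os ε)) *ᵥ Z ω) ∂μ := h1
      _ ≤ ∑ ε, w ε * ∫ ω, φ ((A * Os ε) *ᵥ Z ω) ∂μ := hJ2.2
      _ = ∑ ε, w ε * ∫ ω, φ (A *ᵥ Z ω) ∂μ := Finset.sum_congr rfl fun ε _ => by rw [h2 ε]
      _ = ∫ ω, φ (A *ᵥ Z ω) ∂μ := by rw [← Finset.sum_mul, hw1, one_mul]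
  have hstep2 : ∫ ω, φ (A *ᵥ Z ω) ∂μ ≤ ∑ i, p i * ∫ ω, φ ((σs i) *ᵥ Z ω) ∂μ := by
    have h2 : ∀ i, ∫ ω, φ ((σs i * O i) *ᵥ Z ω) ∂μ = ∫ ω, φ ((σs i) *ᵥ Z ω) ∂μ := by
      intro i
      simp only [hmv]
      exact (Aux.radial_int hZmeas hrad (hO i) (σs i) hφc).2
    calc ∫ ω, φ (A *ᵥ Z ω) ∂μ ≤ ∑ i, p i * ∫ ω, φ ((σs i * O i) *ᵥ Z ω) ∂μ := hJ1.2
      _ = ∑ i, p i * ∫ ω, φ ((σs i) *ᵥ Z ω) ∂μ := Finset.sum_congr rfl fun i _ => by rw [h2 i]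
  -- rewrite both sides of the goal
  have hLHS : ∫ x, φ x ∂(Measure.map (fun ω => σ.mulVec (Z ω)) μ) = ∫ ω, φ (σ *ᵥ Z ω) ∂μ :=
    integral_map (hmeas σ).aemeasurable hφc.aestronglyMeasurable
  have hRHS : ∫ x, φ x ∂(∑ i, ENNReal.ofReal (p i) • Measure.map (fun ω => (σs i).mulVec (Z ω)) μ)
      = ∑ i, p i * ∫ ω, φ ((σs i) *ᵥ Z ω) ∂μ := by
    rw [integral_finset_sum_measure (integrable_finset_sum_measure.mp hint2)]
    refine Finset.sum_congr rfl fun i _ => ?_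
    rw [integral_smul_measure, ENNReal.toReal_ofReal (hp0 i).le, smul_eq_mul,
      integral_map (hmeas (σs i)).aemeasurable hφc.aestronglyMeasurable]
  rw [hLHS, hRHS]
  exact hstep1.trans hstep2
end
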